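/- Suppose {μ_y : y ∈ Y} is a σ-finite disintegration of the σ-finite measure μ with respect to (ν, φ). Then there exists a sequence (D_n) of Borel subsets of X such that (1) for every n and every y ∈ Y, μ_y(D_n) < ∞, and (2) for ν-almost every y ∈ Y, μ_y(X \ ⋃_n D_n) = 0. -/

import Mathlib

open MeasureTheory ENNReal

/-- If `{μy y}` is a σ-finite disintegration of the σ-finite measure `μ` with respect to
`(ν, φ)`, then there is a sequence `(D n)` of Borel sets such that `μy y (D n) < ∞` for all
`n` and all `y`, and `μy y ((⋃ n, D n)ᶜ) = 0` for `ν`-almost every `y`. -/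
theorem almost_uniformly_sigmaFinite
    {X Y : Type*} [MeasurableSpace X] [MeasurableSpace Y]
    [StandardBorelSpace X] [StandardBorelSpace Y]
    (φ : X → Y) (hφ : Measurable φ)
    (μ : Measure X) (ν : Measure Y) [SigmaFinite μ] [SigmaFinite ν]
    (μy : Y → Measure X)
    (hmeas : ∀ B : Set X, MeasurableSet B → Measurable fun y => μy y B)
    (hconc : ∀ y : Y, μy y ((φ ⁻¹' {y})ᶜ) = 0)
    (hint : ∀ B : Set X, MeasurableSet B → μ B = ∫⁻ y, μy y B ∂ν)
    (hsf : ∀ y : Y, SigmaFinite (μy y)) :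
    ∃ D : ℕ → Set X, (∀ n, MeasurableSet (D n)) ∧
      (∀ n, ∀ y : Y, μy y (D n) < ⊤) ∧
      (∀ᵐ y ∂ν, μy y ((⋃ n, D n)ᶜ) = 0) := by
  set S : ℕ → Set X := spanningSets μ with hS
  have hSmeas : ∀ n, MeasurableSet (S n) := fun n => measurableSet_spanningSets μ n
  have hSfin : ∀ n, μ (S n) < ⊤ := fun n => measure_spanningSets_lt_top μ n
  -- the good sets of base points
  set A : ℕ → ℕ → Set Y := fun n m => {y | μy y (S n) ≤ (m : ℝ≥0∞)} with hA
  have hAmeas : ∀ n m, MeasurableSet (A n m) := fun n m =>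
    measurableSet_le (hmeas _ (hSmeas n)) measurable_const
  set E : ℕ → ℕ → Set X := fun n m => S n ∩ φ ⁻¹' (A n m) with hE
  refine ⟨fun k => E (Nat.unpair k).1 (Nat.unpair k).2, ?_, ?_, ?_⟩
  · intro k
    exact (hSmeas _).inter (hφ (hAmeas _ _))
  · intro k y
    set n := (Nat.unpair k).1
    set m := (Nat.unpair k).2
    by_cases hy : y ∈ A n m
    · calc μy y (E n m) ≤ μy y (S n) := measure_mono Set.inter_subset_left
        _ ≤ (m : ℝ≥0∞) := hy
        _ < ⊤ := ENNReal.natCast_lt_top m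
    · have hsub : E n m ⊆ (φ ⁻¹' {y})ᶜ := by
        intro x hx hx'
        have : φ x = y := hx'
        exact hy (this ▸ hx.2)
      calc μy y (E n m) ≤ μy y ((φ ⁻¹' {y})ᶜ) := measure_mono hsub
        _ = 0 := hconc y
        _ < ⊤ := by simp
  · -- a.e. y, μy y (S n) < ∞ for all n
    have hae : ∀ᵐ y ∂ν, ∀ n, μy y (S n) < ⊤ := by
      rw [MeasureTheory.ae_all_iff]
      intro n
      have : ∫⁻ y, μy y (S n) ∂ν ≠ ⊤ := by
        rw [← hint _ (hSmeas n)]; exact (hSfin n).ne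
      exact ae_lt_top (hmeas _ (hSmeas n)) this
    filter_upwards [hae] with y hy
    have hsub : (⋃ k, E (Nat.unpair k).1 (Nat.unpair k).2)ᶜ ⊆ (φ ⁻¹' {y})ᶜ := by
      intro x hx
      simp only [Set.mem_compl_iff, Set.mem_iUnion, not_exists] at hx
      intro hxy
      have hxyy : φ x = y := hxy
      obtain ⟨n, hn⟩ := Set.mem_iUnion.mp
        ((iUnion_spanningSets μ).symm ▸ Set.mem_univ x : x ∈ ⋃ n, S n)
      obtain ⟨m, hm⟩ := ENNReal.exists_nat_gt (hy n).ne
      exact hx (Nat.pair n m) (by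
        simp only [Nat.unpair_pair]
        exact ⟨hn, by simp only [Set.mem_preimage, hxyy]; exact hm.le⟩)
    exact le_antisymm ((measure_mono hsub).trans (hconc y).le) (zero_le)
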